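/- Fix n ≥ 1 and v ∈ {1, …, n}. If J ⊆ I_n is adjacency-avoiding, then refl_v(J) is adjacency-avoiding. Moreover, if ⟦v⟧ ∉ J, then J is adjacency-avoiding if and only if refl_v(J) is adjacency-avoiding. -/
import Mathlib


/-- `K` is an interval of `{1, …, n}`: a set `⟦i,j⟧ = {i, i+1, …, j}` with `1 ≤ i ≤ j ≤ n`. -/
def IsInterval (n : ℕ) (K : Set ℕ) : Prop :=
  ∃ i j, 1 ≤ i ∧ i ≤ j ∧ j ≤ n ∧ K = Set.Icc i j

/-- The lower bound `b(K)` of an interval `K`. -/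
noncomputable def intB (K : Set ℕ) : ℕ := sInf K

/-- The upper bound `e(K)` of an interval `K`. -/
noncomputable def intE (K : Set ℕ) : ℕ := sSup K

/-- `J(B, E)`: the set of intervals `K` of `{1, …, n}` with `b(K) ∈ B` and `e(K) ∈ E`. -/
def intervalsOf (n : ℕ) (B E : Set ℕ) : Set (Set ℕ) :=
  {K | IsInterval n K ∧ intB K ∈ B ∧ intE K ∈ E}

/-- Two intervals `K`, `L` are adjacent if `b(K) = e(L) + 1` or `b(L) = e(K) + 1`. -/
def Adjacent (K L : Set ℕ) : Prop :=
  intB K = intE L + 1 ∨ intB L = intE K + 1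

/-- An interval set is adjacency-avoiding if it contains no pair of adjacent intervals. -/
def AdjAvoiding (J : Set (Set ℕ)) : Prop :=
  ∀ K ∈ J, ∀ L ∈ J, ¬ Adjacent K L

/-- The shift `A[1] = {a + 1 : a ∈ A}` of a set of integers. -/
def shiftSet (A : Set ℕ) : Set ℕ := (· + 1) '' A

open Classical in
/-- The interval reflection at `v`, defined on intervals `K ≠ ⟦v⟧`:
`refl_v(K) = K ∪ {v}` if `v ∉ K` and `K ∪ {v}` is an interval of `{1, …, n}`;
`refl_v(K) = K \ {v}` if `v ∈ K` and `K \ {v}` is an interval of `{1, …, n}`;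
`refl_v(K) = K` otherwise. -/
noncomputable def reflInt (n v : ℕ) (K : Set ℕ) : Set ℕ :=
  if v ∉ K ∧ IsInterval n (K ∪ {v}) then K ∪ {v}
  else if v ∈ K ∧ IsInterval n (K \ {v}) then K \ {v}
  else K

/-- `refl_v(J) = {refl_v(K) : K ∈ J \ {⟦v⟧}}`. -/
noncomputable def reflSet (n v : ℕ) (J : Set (Set ℕ)) : Set (Set ℕ) :=
  reflInt n v '' (J \ {Set.Icc v v})

lemma intB_Icc {i j : ℕ} (h : i ≤ j) : intB (Set.Icc i j) = i := csInf_Icc h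
lemma intE_Icc {i j : ℕ} (h : i ≤ j) : intE (Set.Icc i j) = j := csSup_Icc h

lemma reflInt_spec (n v : ℕ) (hv : 1 ≤ v) (hvn : v ≤ n) (K : Set ℕ)
    (hK : IsInterval n K) (hKne : K ≠ Set.Icc v v) :
    intB (reflInt n v K) = Equiv.swap v (v+1) (intB K) ∧
    intE (reflInt n v K) + 1 = Equiv.swap v (v+1) (intE K + 1) := by
  classical
  obtain ⟨i, j, hi, hij, hjn, rfl⟩ := hK
  have hne : ¬ (i = v ∧ j = v) := by
    rintro ⟨rfl, rfl⟩; exact hKne rfl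
  have swap_eq : ∀ x : ℕ, x ≠ v → x ≠ v + 1 → Equiv.swap v (v+1) x = x :=
    fun x h1 h2 => Equiv.swap_apply_of_ne_of_ne h1 h2
  by_cases h1 : v + 1 = i
  · -- refl = Icc v j
    have hU : Set.Icc i j ∪ {v} = Set.Icc v j := by
      ext x; simp [Set.mem_Icc]; omega
    have hcond : v ∉ Set.Icc i j ∧ IsInterval n (Set.Icc i j ∪ {v}) := by
      refine ⟨by simp [Set.mem_Icc]; omega, ⟨v, j, hv, by omega, hjn, hU⟩⟩
    rw [reflInt, if_pos hcond, hU, intB_Icc (by omega), intE_Icc (by omega),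
      intB_Icc hij, intE_Icc hij, swap_eq (j+1) (by omega) (by omega)]
    subst h1
    exact ⟨(Equiv.swap_apply_right v (v+1)).symm, rfl⟩
  by_cases h2 : v = j + 1
  · -- refl = Icc i v
    have hU : Set.Icc i j ∪ {v} = Set.Icc i v := by
      ext x; simp [Set.mem_Icc]; omega
    have hcond : v ∉ Set.Icc i j ∧ IsInterval n (Set.Icc i j ∪ {v}) := by
      refine ⟨by simp [Set.mem_Icc]; omega, ⟨i, v, hi, by omega, hvn, hU⟩⟩
    rw [reflInt, if_pos hcond, hU, intB_Icc (by omega), intE_Icc (by omega),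
      intB_Icc hij, intE_Icc hij, swap_eq i (by omega) (by omega)]
    subst h2
    exact ⟨rfl, (Equiv.swap_apply_left (j+1) (j+1+1)).symm⟩
  by_cases h3 : v = i
  · -- v = i < j, refl = Icc (i+1) j
    have hvj : v < j := by omega
    have hD : Set.Icc i j \ {v} = Set.Icc (i+1) j := by
      ext x; simp [Set.mem_Icc]; omega
    have hc1 : ¬ (v ∉ Set.Icc i j ∧ IsInterval n (Set.Icc i j ∪ {v})) := by
      rintro ⟨hmem, -⟩; exact hmem (by simp [Set.mem_Icc]; omega)
    have hcond : v ∈ Set.Icc i j ∧ IsInterval n (Set.Icc i j \ {v}) := by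
      refine ⟨by simp [Set.mem_Icc]; omega, ⟨i+1, j, by omega, by omega, hjn, hD⟩⟩
    rw [reflInt, if_neg hc1, if_pos hcond, hD, intB_Icc (by omega), intE_Icc (by omega),
      intB_Icc hij, intE_Icc hij, swap_eq (j+1) (by omega) (by omega)]
    subst h3
    exact ⟨(Equiv.swap_apply_left v (v+1)).symm, rfl⟩
  by_cases h4 : v = j
  · -- v = j > i, refl = Icc i (j-1)
    have hiv : i < v := by omega
    have hD : Set.Icc i j \ {v} = Set.Icc i (j-1) := by
      ext x; simp [Set.mem_Icc]; omega
    have hc1 : ¬ (v ∉ Set.Icc i j ∧ IsInterval n (Set.Icc i j ∪ {v})) := by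
      rintro ⟨hmem, -⟩; exact hmem (by simp [Set.mem_Icc]; omega)
    have hcond : v ∈ Set.Icc i j ∧ IsInterval n (Set.Icc i j \ {v}) := by
      refine ⟨by simp [Set.mem_Icc]; omega, ⟨i, j-1, hi, by omega, by omega, hD⟩⟩
    rw [reflInt, if_neg hc1, if_pos hcond, hD, intB_Icc (by omega), intE_Icc (by omega),
      intB_Icc hij, intE_Icc hij, swap_eq i (by omega) (by omega)]
    subst h4
    have h' : v - 1 + 1 = v := by omega
    rw [h']
    exact ⟨rfl, (Equiv.swap_apply_right v (v+1)).symm⟩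
  · -- refl = K
    by_cases h5 : i ≤ v ∧ v ≤ j
    · -- i < v < j: K \ {v} not an interval
      have hc1 : ¬ (v ∉ Set.Icc i j ∧ IsInterval n (Set.Icc i j ∪ {v})) := by
        rintro ⟨hmem, -⟩; exact hmem (by simp [Set.mem_Icc]; omega)
      have hc2 : ¬ (v ∈ Set.Icc i j ∧ IsInterval n (Set.Icc i j \ {v})) := by
        rintro ⟨-, a, b, ha, hab, hbn, hE⟩
        have hiE : i ∈ Set.Icc a b := hE ▸ (by simp [Set.mem_Icc]; omega)
        have hjE : j ∈ Set.Icc a b := hE ▸ (by simp [Set.mem_Icc]; omega)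
        have hvE : v ∈ Set.Icc a b := by
          simp [Set.mem_Icc] at hiE hjE ⊢; omega
        rw [← hE] at hvE
        exact hvE.2 rfl
      rw [reflInt, if_neg hc1, if_neg hc2, intB_Icc hij, intE_Icc hij,
        swap_eq i (by omega) (by omega), swap_eq (j+1) (by omega) (by omega)]
      exact ⟨rfl, rfl⟩
    · -- v outside, not adjacent: K ∪ {v} not an interval
      have hc1 : ¬ (v ∉ Set.Icc i j ∧ IsInterval n (Set.Icc i j ∪ {v})) := by
        rintro ⟨-, a, b, ha, hab, hbn, hE⟩
        have hvE : v ∈ Set.Icc a b := hE ▸ (by simp)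
        have hiE : i ∈ Set.Icc a b := hE ▸ (by simp [Set.mem_Icc]; omega)
        have hjE : j ∈ Set.Icc a b := hE ▸ (by simp [Set.mem_Icc]; omega)
        -- some w strictly between: w = v+1 (if v < i) or w = v-1 (if v > j)
        rcases (by omega : v + 1 < i ∨ j + 1 < v) with hcase | hcase
        · have : v + 1 ∈ Set.Icc a b := by
            simp [Set.mem_Icc] at hvE hiE ⊢; omega
          rw [← hE] at this
          simp [Set.mem_Icc] at this; omega
        · have : v - 1 ∈ Set.Icc a b := by
            simp [Set.mem_Icc] at hvE hjE ⊢; omega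
          rw [← hE] at this
          simp [Set.mem_Icc] at this; omega
      have hc2 : ¬ (v ∈ Set.Icc i j ∧ IsInterval n (Set.Icc i j \ {v})) := by
        rintro ⟨hmem, -⟩
        simp [Set.mem_Icc] at hmem; omega
      rw [reflInt, if_neg hc1, if_neg hc2, intB_Icc hij, intE_Icc hij,
        swap_eq i (by omega) (by omega), swap_eq (j+1) (by omega) (by omega)]
      exact ⟨rfl, rfl⟩

lemma adjacent_reflInt (n v : ℕ) (hv : 1 ≤ v) (hvn : v ≤ n) {K L : Set ℕ}
    (hK : IsInterval n K) (hKne : K ≠ Set.Icc v v)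
    (hL : IsInterval n L) (hLne : L ≠ Set.Icc v v) :
    Adjacent (reflInt n v K) (reflInt n v L) ↔ Adjacent K L := by
  obtain ⟨hBK, hEK⟩ := reflInt_spec n v hv hvn K hK hKne
  obtain ⟨hBL, hEL⟩ := reflInt_spec n v hv hvn L hL hLne
  unfold Adjacent
  rw [hBK, hBL, hEK, hEL, Equiv.apply_eq_iff_eq, Equiv.apply_eq_iff_eq]

/-- If `J ⊆ I_n` is adjacency-avoiding, so is `refl_v(J)`; moreover, if `⟦v⟧ ∉ J`, then
`J` is adjacency-avoiding if and only if `refl_v(J)` is. -/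
theorem reflSet_adjAvoiding (n v : ℕ) (hv : 1 ≤ v) (hvn : v ≤ n)
    (J : Set (Set ℕ)) (hJint : ∀ K ∈ J, IsInterval n K) :
    (AdjAvoiding J → AdjAvoiding (reflSet n v J)) ∧
      (Set.Icc v v ∉ J → (AdjAvoiding J ↔ AdjAvoiding (reflSet n v J))) := by
  have fwd : AdjAvoiding J → AdjAvoiding (reflSet n v J) := by
    intro hJ K' hK' L' hL'
    obtain ⟨K, ⟨hKJ, hKne⟩, rfl⟩ := hK'
    obtain ⟨L, ⟨hLJ, hLne⟩, rfl⟩ := hL'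
    rw [adjacent_reflInt n v hv hvn (hJint K hKJ) hKne (hJint L hLJ) hLne]
    exact hJ K hKJ L hLJ
  refine ⟨fwd, fun hvJ => ⟨fwd, fun hR K hK L hL => ?_⟩⟩
  have hKne : K ≠ Set.Icc v v := fun h => hvJ (h ▸ hK)
  have hLne : L ≠ Set.Icc v v := fun h => hvJ (h ▸ hL)
  rw [← adjacent_reflInt n v hv hvn (hJint K hK) hKne (hJint L hL) hLne]
  exact hR _ ⟨K, ⟨hK, hKne⟩, rfl⟩ _ ⟨L, ⟨hL, hLne⟩, rfl⟩
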